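/- Let S ≥ 1, P ∈ {1,...,S}, and let σ ≥ 0 and ξ ≥ 0 be real numbers. The map G̃^P defined by G̃^P(u) = sort([u + σ·e_P − ξ·1]⁺) is nondecreasing on nondecreasingly sorted vectors of (ℝ⁺)^S for the coordinatewise ordering: if u ≺ v then G̃^P(u) ≺ G̃^P(v). In particular the Kiefer–Wolfowitz map G = G̃^1 is ≺-nondecreasing. -/
import Mathlib


open Finset

/-- The nondecreasing rearrangement of a finite real vector. -/
noncomputable def sortVec {S : ℕ} (u : Fin S → ℝ) : Fin S → ℝ := u ∘ Tuple.sort u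

/-- The Schur-convex semi-ordering `≺_c` : equal total sums, and each tail sum
(from the second coordinate on) of the sorted version of `u` is dominated by that of `v`. -/
def schurLE {S : ℕ} (u v : Fin S → ℝ) : Prop :=
  (∑ i, u i = ∑ i, v i) ∧
  ∀ k : Fin S, 1 ≤ (k : ℕ) →
    ∑ i ∈ Finset.Ici k, sortVec u i ≤ ∑ i ∈ Finset.Ici k, sortVec v i

/-- The semi-ordering `≺_*` : every tail sum of `u` is dominated by that of `v`. -/
def starLE {S : ℕ} (u v : Fin S → ℝ) : Prop :=
  ∀ k : Fin S, ∑ i ∈ Finset.Ici k, u i ≤ ∑ i ∈ Finset.Ici k, v i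

/-- The semi-ordering `≺_P` : `u ≺_* v` and `u(ℓ) ≤ v(ℓ)` for every `ℓ ≥ P`. -/
def precP {S : ℕ} (P : Fin S) (u v : Fin S → ℝ) : Prop :=
  starLE u v ∧ ∀ ℓ : Fin S, P ≤ ℓ → u ℓ ≤ v ℓ

/-- The map `G̃^P : u ↦ sort([u + σ·e_P − ξ·1]⁺)`.  For `P` the first index,
this is the Kiefer–Wolfowitz map `G`. -/
noncomputable def GP {S : ℕ} (σ ξ : ℝ) (P : Fin S) (u : Fin S → ℝ) : Fin S → ℝ :=
  sortVec (fun i => max (u i + (if i = P then σ else 0) - ξ) 0)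

lemma sortVec_mono {S : ℕ} {u v : Fin S → ℝ} (h : ∀ i, u i ≤ v i) (i : Fin S) :
    sortVec u i ≤ sortVec v i := by
  set σu := Tuple.sort u with hσu
  set σv := Tuple.sort v with hσv
  have hinj : Function.Injective (fun k : Fin S => σu.symm (σv k)) := fun a b hab => by
    simpa using hab
  have hns : ¬ ((Finset.Iic i).image (fun k => σu.symm (σv k))) ⊆ Finset.Iio i := by
    intro hsub
    have h1 := Finset.card_le_card hsub
    rw [Finset.card_image_of_injective _ hinj, Fin.card_Iic, Fin.card_Iio] at h1
    omega
  obtain ⟨x, hx, hx'⟩ := Finset.not_subset.mp hns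
  obtain ⟨k, hk, rfl⟩ := Finset.mem_image.mp hx
  have hki : k ≤ i := Finset.mem_Iic.mp hk
  have hile : i ≤ σu.symm (σv k) := le_of_not_gt (by simpa using hx')
  calc sortVec u i = (u ∘ σu) i := rfl
    _ ≤ (u ∘ σu) (σu.symm (σv k)) := Tuple.monotone_sort u hile
    _ = u (σv k) := by simp [Function.comp]
    _ ≤ v (σv k) := h _
    _ = sortVec v k := rfl
    _ ≤ sortVec v i := Tuple.monotone_sort v hki

/-- `G̃^P` is nondecreasing for the coordinatewise ordering on sorted
nonnegative vectors; in particular so is the Kiefer–Wolfowitz map `G = G̃^1`. -/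
theorem GP_monotone {S : ℕ} (hS : 0 < S) (P : Fin S) (σ ξ : ℝ)
    (hσ : 0 ≤ σ) (hξ : 0 ≤ ξ)
    (u v : Fin S → ℝ)
    (hu : Monotone u) (hv : Monotone v)
    (hu0 : ∀ i, 0 ≤ u i) (hv0 : ∀ i, 0 ≤ v i)
    (huv : ∀ i, u i ≤ v i) :
    ∀ i, GP σ ξ P u i ≤ GP σ ξ P v i := by
  intro i
  apply sortVec_mono
  intro j
  apply max_le_max _ le_rfl
  have := huv j
  gcongr
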